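/- arXiv:2306.05610 — 2 statements merged into one kernel-verified Lean document; each statement's English description precedes it below -/
import Mathlib

section
/- Let d ≥ 1. (i) For every integer j ≥ 1 and every s ≥ 0, ∫_{ℝ^d} G_{2j}(y)·|y|^s dy = (2^s Γ((d+s)/2)/Γ(d/2)) · (Γ(j + s/2)/Γ(j)). (ii) For 0 < α ≤ 1 and 0 ≤ s < α, the integral ∫_{ℝ^d} A_{α,1}(y)·|y|^s dy = ∑_{j=1}^∞ a_{α,j} ∫_{ℝ^d} G_{2j}(y)|y|^s dy is finite. -/
open MeasureTheory Real
open scoped ENNReal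

noncomputable section

/-- The coefficients `a_{α,j} = |binom(α/2, j)| = (α/2)·∏_{k=1}^{j−1}(k − α/2)/j!`. -/
def aCoeff (α : ℝ) (j : ℕ) : ℝ :=
  (α / 2) * (∏ k ∈ Finset.Icc 1 (j - 1), ((k : ℝ) - α / 2)) / (Nat.factorial j)

/-- The Bessel kernel `G_s` on `ℝ^d`. -/
def besselKernel (d : ℕ) (s : ℝ) (x : EuclideanSpace ℝ (Fin d)) : ℝ :=
  (1 / Real.Gamma (s / 2)) *
    ∫ t in Set.Ioi (0 : ℝ),
      (4 * π * t) ^ (-(d : ℝ) / 2) * Real.exp (-‖x‖ ^ 2 / (4 * t)) * Real.exp (-t) *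
        t ^ (s / 2 - 1)

/-- The kernel `A_{α,μ}(z) = μ^d ∑_{j≥1} a_{α,j} G_{2j}(μ z)`. -/
def AKernel (d : ℕ) (α μ : ℝ) (z : EuclideanSpace ℝ (Fin d)) : ℝ :=
  μ ^ d * ∑' j : ℕ, aCoeff α (j + 1) * besselKernel d (2 * (j + 1)) (μ • z)

/-- The Bessel–Riesz quotient operator `E_{α,μ} f = f − A_{α,μ} ⋆ f`. -/
def Eop (d : ℕ) (α μ : ℝ) (f : EuclideanSpace ℝ (Fin d) → ℝ)
    (x : EuclideanSpace ℝ (Fin d)) : ℝ :=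
  f x - ∫ y, AKernel d α μ (x - y) * f y

/-- The `L^p` modulus of continuity `ω(f,t)_p = sup_{|h| ≤ t} ‖f(·+h) − f‖_p`. -/
def modCont (d : ℕ) (p : ℝ≥0∞) (f : EuclideanSpace ℝ (Fin d) → ℝ) (t : ℝ) : ℝ≥0∞ :=
  ⨆ h ∈ {h : EuclideanSpace ℝ (Fin d) | ‖h‖ ≤ t},
    eLpNorm (fun x => f (x + h) - f x) p volume
section Helpers

lemma rpow_le_exp_sq {b s : ℝ} (hb : 0 < b) (hs : 0 ≤ s) :
    ∀ r : ℝ, 0 ≤ r → r ^ s ≤ (Real.exp (s^2/(4*b)) + 1) * Real.exp (b * r ^ 2) := by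
  intro r hr
  set C := Real.exp (s^2/(4*b)) + 1 with hC
  have hC1 : 1 ≤ C := by have := Real.exp_pos (s^2/(4*b)); simp only [hC]; linarith
  rcases le_or_gt r 1 with h1 | h1
  · have h2 : r ^ s ≤ 1 := Real.rpow_le_one hr h1 hs
    have h3 : (1:ℝ) ≤ Real.exp (b * r ^ 2) := Real.one_le_exp (by positivity)
    nlinarith [Real.exp_pos (b * r ^ 2)]
  · have hr0 : 0 < r := lt_trans one_pos h1
    rw [Real.rpow_def_of_pos hr0]
    have hlog : Real.log r ≤ r := (Real.log_le_sub_one_of_pos hr0).trans (by linarith)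
    have h4 : Real.log r * s ≤ r * s := mul_le_mul_of_nonneg_right hlog hs
    have h5 : r * s ≤ s^2/(4*b) + b * r^2 := by
      rw [← sub_nonneg]
      have key : s^2/(4*b) + b * r^2 - r * s = (2*b*r - s)^2 / (4*b) := by
        field_simp; ring
      rw [key]; positivity
    calc Real.exp (Real.log r * s) ≤ Real.exp (s^2/(4*b) + b * r^2) := by
          apply Real.exp_le_exp.mpr; linarith
      _ = Real.exp (s^2/(4*b)) * Real.exp (b * r^2) := Real.exp_add _ _
      _ ≤ C * Real.exp (b * r^2) := by
          nlinarith [Real.exp_pos (b * r^2), Real.exp_pos (s^2/(4*b))]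

lemma integrable_gauss {d : ℕ} {b : ℝ} (hb : 0 < b) :
    Integrable (fun y : EuclideanSpace ℝ (Fin d) => Real.exp (-(b * ‖y‖ ^ 2))) := by
  have h := (GaussianFourier.integrable_cexp_neg_mul_sq_norm_add
    (b := (b:ℂ)) (by simpa using hb) 0 (0 : EuclideanSpace ℝ (Fin d))).norm
  have heq : (fun v : EuclideanSpace ℝ (Fin d) =>
      ‖Complex.exp (-(b:ℂ) * (‖v‖:ℂ)^2 + 0 * ((inner ℝ (0 : EuclideanSpace ℝ (Fin d)) v : ℝ) : ℂ))‖)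
      = fun y => Real.exp (-(b * ‖y‖ ^ 2)) := by
    funext v
    rw [Complex.norm_exp]
    congr 1
    simp [Complex.add_re, Complex.mul_re, Complex.ofReal_re, Complex.ofReal_im,
      ← Complex.ofReal_pow]
  rwa [heq] at h

lemma cont_gauss_moment {d : ℕ} {b s : ℝ} (hs : 0 ≤ s) :
    Continuous (fun y : EuclideanSpace ℝ (Fin d) => Real.exp (-(b * ‖y‖ ^ 2)) * ‖y‖ ^ s) := by
  apply Continuous.mul
  · exact Real.continuous_exp.comp ((continuous_const.mul (continuous_norm.pow 2)).neg)
  · exact continuous_norm.rpow_const (fun x => Or.inr hs)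

lemma integrable_gauss_moment {d : ℕ} {b s : ℝ} (hb : 0 < b) (hs : 0 ≤ s) :
    Integrable (fun y : EuclideanSpace ℝ (Fin d) => Real.exp (-(b * ‖y‖ ^ 2)) * ‖y‖ ^ s) := by
  set C := Real.exp (s^2/(4*(b/2))) + 1 with hC
  have hmaj := integrable_gauss (d := d) (b := b/2) (by positivity)
  refine Integrable.mono' (hmaj.const_mul C) (cont_gauss_moment hs).aestronglyMeasurable
    (Filter.Eventually.of_forall fun y => ?_)
  have h1 : 0 ≤ Real.exp (-(b * ‖y‖ ^ 2)) * ‖y‖ ^ s := by positivity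
  rw [Real.norm_eq_abs, abs_of_nonneg h1]
  have h2 := rpow_le_exp_sq (b := b/2) (by positivity) hs ‖y‖ (norm_nonneg y)
  calc Real.exp (-(b * ‖y‖ ^ 2)) * ‖y‖ ^ s
      ≤ Real.exp (-(b * ‖y‖ ^ 2)) * (C * Real.exp (b/2 * ‖y‖ ^ 2)) := by
        exact mul_le_mul_of_nonneg_left h2 (Real.exp_pos _).le
    _ = C * (Real.exp (-(b * ‖y‖ ^ 2)) * Real.exp (b/2 * ‖y‖ ^ 2)) := by ring
    _ = C * Real.exp (-(b/2 * ‖y‖ ^ 2)) := by rw [← Real.exp_add]; congr 1; ring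

lemma integral_gauss_moment {d : ℕ} (hd : 1 ≤ d) {b s : ℝ} (hb : 0 < b) (hs : 0 ≤ s) :
    ∫ y : EuclideanSpace ℝ (Fin d), Real.exp (-(b * ‖y‖ ^ 2)) * ‖y‖ ^ s
      = Real.pi ^ ((d:ℝ)/2) * b ^ (-(((d:ℝ) + s)/2)) *
          (Real.Gamma (((d:ℝ)+s)/2) / Real.Gamma ((d:ℝ)/2)) := by
  haveI : Nonempty (Fin d) := Fin.pos_iff_nonempty.mp hd
  haveI : Nontrivial (EuclideanSpace ℝ (Fin d)) := inferInstance
  have hd1 : (1:ℝ) ≤ (d:ℝ) := by exact_mod_cast hd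
  have key := integral_fun_norm_addHaar (volume : Measure (EuclideanSpace ℝ (Fin d)))
    (fun r : ℝ => Real.exp (-(b * r ^ 2)) * r ^ s)
  rw [finrank_euclideanSpace_fin] at key
  rw [key]
  have hg0 : 0 < Real.Gamma ((d:ℝ) / 2) := Real.Gamma_pos_of_pos (by positivity)
  have hvol : ((volume (Metric.ball (0 : EuclideanSpace ℝ (Fin d)) 1)).toReal)
      = Real.sqrt π ^ d / Real.Gamma ((d:ℝ) / 2 + 1) := by
    rw [EuclideanSpace.volume_ball, Fintype.card_fin]
    have hg : 0 < Real.Gamma ((d:ℝ) / 2 + 1) := Real.Gamma_pos_of_pos (by positivity)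
    have hnn : 0 ≤ Real.sqrt π ^ d / Real.Gamma ((d:ℝ) / 2 + 1) := by positivity
    rw [ENNReal.toReal_mul, ENNReal.toReal_pow, ENNReal.toReal_ofReal zero_le_one,
      one_pow, one_mul, ENNReal.toReal_ofReal hnn]
  rw [measureReal_def, hvol]
  have hint : (∫ y in Set.Ioi (0:ℝ), y ^ (d - 1) • (Real.exp (-(b * y ^ 2)) * y ^ s))
      = b ^ (-(((d:ℝ)+s)/2)) * (1/2) * Real.Gamma (((d:ℝ)+s)/2) := by
    have hcongr : ∀ y ∈ Set.Ioi (0:ℝ), y ^ (d - 1) • (Real.exp (-(b * y ^ 2)) * y ^ s)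
        = y ^ ((d:ℝ) - 1 + s) * Real.exp (-b * y ^ (2:ℝ)) := by
      intro y hy
      have hy0 : (0:ℝ) < y := hy
      rw [smul_eq_mul, ← Real.rpow_natCast y (d - 1), Nat.cast_sub hd, Nat.cast_one,
        show ((2:ℝ)) = ((2:ℕ):ℝ) by norm_num, Real.rpow_natCast,
        Real.rpow_add hy0]
      push_cast
      ring
    rw [setIntegral_congr_fun measurableSet_Ioi hcongr,
      integral_rpow_mul_exp_neg_mul_rpow two_pos (by linarith) hb,
      show ((d:ℝ) - 1 + s + 1) = (d:ℝ) + s by ring, neg_div]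
  rw [hint, nsmul_eq_mul, smul_eq_mul]
  have hsqrt : Real.sqrt π ^ d = π ^ ((d:ℝ)/2) := by
    rw [Real.sqrt_eq_rpow, ← Real.rpow_natCast (π ^ ((1:ℝ)/2)) d, ← Real.rpow_mul pi_pos.le]
    congr 1
    ring
  rw [hsqrt, Real.Gamma_add_one (by positivity)]
  have hdne : ((d:ℝ)) ≠ 0 := by linarith
  field_simp

end Helpers

section BesselLemmas

lemma besselKernel_nonneg (d : ℕ) {σ : ℝ} (hσ : 0 < σ) (x : EuclideanSpace ℝ (Fin d)) :
    0 ≤ besselKernel d σ x := by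
  unfold besselKernel
  apply mul_nonneg
  · have := Real.Gamma_pos_of_pos (show 0 < σ/2 by positivity)
    positivity
  · apply setIntegral_nonneg measurableSet_Ioi
    intro t ht
    have ht0 : (0:ℝ) < t := ht
    have h4 : (0:ℝ) < 4 * π * t := by have := Real.pi_pos; positivity
    have h1 : (0:ℝ) ≤ (4 * π * t) ^ (-(d : ℝ) / 2) := Real.rpow_nonneg h4.le _
    have h2 : (0:ℝ) ≤ t ^ (σ / 2 - 1) := Real.rpow_nonneg ht0.le _
    positivity

lemma besselKernel_inner_measurable (d : ℕ) (σ : ℝ) :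
    Measurable (fun p : ℝ × EuclideanSpace ℝ (Fin d) =>
      (4 * π * p.1) ^ (-(d : ℝ) / 2) * Real.exp (-‖p.2‖ ^ 2 / (4 * p.1)) * Real.exp (-p.1) *
        p.1 ^ (σ / 2 - 1)) := by
  apply Measurable.mul
  apply Measurable.mul
  apply Measurable.mul
  · exact (measurable_const.mul measurable_fst).pow measurable_const
  · exact Real.measurable_exp.comp
      (((measurable_norm.comp measurable_snd).pow_const 2).neg.div
        (measurable_const.mul measurable_fst))
  · exact Real.measurable_exp.comp measurable_fst.neg
  · exact measurable_fst.pow measurable_const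

lemma besselKernel_measurable (d : ℕ) (σ : ℝ) : Measurable (besselKernel d σ) := by
  unfold besselKernel
  apply Measurable.const_mul
  have h := (besselKernel_inner_measurable d σ).stronglyMeasurable
  exact (MeasureTheory.StronglyMeasurable.integral_prod_left
    (μ := volume.restrict (Set.Ioi (0:ℝ)))
    (f := fun t (x : EuclideanSpace ℝ (Fin d)) =>
      (4 * π * t) ^ (-(d : ℝ) / 2) * Real.exp (-‖x‖ ^ 2 / (4 * t)) * Real.exp (-t) *
        t ^ (σ / 2 - 1)) h).measurable

end BesselLemmas

lemma bessel_moment {d : ℕ} (hd : 1 ≤ d) {c : ℝ} (hc : 0 < c) {s : ℝ} (hs : 0 ≤ s) :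
    Integrable (fun y : EuclideanSpace ℝ (Fin d) => besselKernel d (2*c) y * ‖y‖ ^ s) ∧
    ∫ y : EuclideanSpace ℝ (Fin d), besselKernel d (2*c) y * ‖y‖ ^ s
      = 2 ^ s * Real.Gamma (((d:ℝ)+s)/2) / Real.Gamma ((d:ℝ)/2) *
          (Real.Gamma (c + s/2) / Real.Gamma c) := by
  set E := EuclideanSpace ℝ (Fin d)
  set R : ℝ := Real.Gamma (((d:ℝ)+s)/2) / Real.Gamma ((d:ℝ)/2) with hR
  set K : ℝ → E → ℝ := fun t y =>
    (4 * π * t) ^ (-(d : ℝ) / 2) * Real.exp (-‖y‖ ^ 2 / (4 * t)) * Real.exp (-t) *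
      t ^ (c - 1) * ‖y‖ ^ s with hKdef
  have hptwise : ∀ y : E, besselKernel d (2*c) y * ‖y‖ ^ s
      = (1 / Real.Gamma c) * ∫ t in Set.Ioi (0:ℝ), K t y := by
    intro y
    rw [besselKernel, show (2*c/2 : ℝ) = c by ring, mul_assoc,
      ← MeasureTheory.integral_mul_const]
  have hKmeas : Measurable (Function.uncurry K) := by
    have h1 := (besselKernel_inner_measurable d (2*c)).mul
      ((measurable_norm.comp measurable_snd).pow (measurable_const : Measurable fun _ : ℝ × E => s))
    convert h1 using 1
    funext p
    simp [Function.uncurry, hKdef, show (2*c/2 : ℝ) = c by ring, Pi.mul_apply]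
  have hKnn : ∀ t : ℝ, t ∈ Set.Ioi (0:ℝ) → ∀ y : E, 0 ≤ K t y := by
    intro t ht y
    have ht0 : (0:ℝ) < t := ht
    have h4 : (0:ℝ) < 4 * π * t := by have := Real.pi_pos; positivity
    have h1 : (0:ℝ) ≤ (4 * π * t) ^ (-(d : ℝ) / 2) := Real.rpow_nonneg h4.le _
    have h2 : (0:ℝ) ≤ t ^ (c - 1) := Real.rpow_nonneg ht0.le _
    have h3 : (0:ℝ) ≤ ‖y‖ ^ s := Real.rpow_nonneg (norm_nonneg y) _
    simp only [hKdef]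
    positivity
  have hslice : ∀ t : ℝ, t ∈ Set.Ioi (0:ℝ) → Integrable (fun y : E => K t y) ∧
      ∫ y : E, K t y = 2 ^ s * R * (Real.exp (-t) * t ^ (c + s/2 - 1)) := by
    intro t ht
    have ht0 : (0:ℝ) < t := ht
    have hb : (0:ℝ) < 1/(4*t) := by positivity
    have hfun : (fun y : E => K t y) = fun y =>
        ((4*π*t) ^ (-(d:ℝ)/2) * Real.exp (-t) * t ^ (c-1)) *
          (Real.exp (-(1/(4*t) * ‖y‖ ^ 2)) * ‖y‖ ^ s) := by
      funext y
      simp only [hKdef]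
      rw [show -‖y‖^2/(4*t) = -(1/(4*t) * ‖y‖^2) by ring]
      ring
    constructor
    · rw [hfun]; exact (integrable_gauss_moment hb hs).const_mul _
    · rw [hfun, MeasureTheory.integral_const_mul, integral_gauss_moment hd hb hs]
      have e1 : ((1:ℝ)/(4*t)) ^ (-(((d:ℝ)+s)/2)) = (4*t) ^ (((d:ℝ)+s)/2) := by
        rw [one_div, Real.inv_rpow (by positivity), Real.rpow_neg (by positivity), inv_inv]
      have e2 : ((4:ℝ)*π*t) ^ (-(d:ℝ)/2) = π ^ (-(d:ℝ)/2) * (4*t) ^ (-(d:ℝ)/2) := by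
        rw [show (4:ℝ)*π*t = π * (4*t) by ring, Real.mul_rpow Real.pi_pos.le (by positivity)]
      have e3 : ((4:ℝ)*t) ^ (-(d:ℝ)/2) * (4*t) ^ (((d:ℝ)+s)/2) = (4*t) ^ (s/2) := by
        rw [← Real.rpow_add (by positivity)]; congr 1; ring
      have e4 : ((4:ℝ)*t) ^ (s/2) = 2 ^ s * t ^ (s/2) := by
        rw [Real.mul_rpow (by norm_num) ht0.le]
        congr 1
        rw [show (4:ℝ) = 2 ^ (2:ℕ) by norm_num, ← Real.rpow_natCast 2 2,
          ← Real.rpow_mul (by norm_num)]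
        congr 1
        push_cast; ring
      have e5 : π ^ (-(d:ℝ)/2) * π ^ ((d:ℝ)/2) = 1 := by
        rw [← Real.rpow_add Real.pi_pos, show (-(d:ℝ)/2 + (d:ℝ)/2) = 0 by ring, Real.rpow_zero]
      have e6 : t ^ (c-1) * t ^ (s/2) = t ^ (c + s/2 - 1) := by
        rw [← Real.rpow_add ht0]; congr 1; ring
      rw [e1, e2]
      calc π ^ (-(d:ℝ)/2) * (4*t) ^ (-(d:ℝ)/2) * Real.exp (-t) * t ^ (c-1) *
            (π ^ ((d:ℝ)/2) * (4*t) ^ (((d:ℝ)+s)/2) * R)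
          = (π ^ (-(d:ℝ)/2) * π ^ ((d:ℝ)/2)) *
              ((4*t) ^ (-(d:ℝ)/2) * (4*t) ^ (((d:ℝ)+s)/2)) *
              Real.exp (-t) * t ^ (c-1) * R := by ring
        _ = 1 * (4*t) ^ (s/2) * Real.exp (-t) * t ^ (c-1) * R := by rw [e5, e3]
        _ = 2 ^ s * (t ^ (c-1) * t ^ (s/2)) * Real.exp (-t) * R := by rw [e4]; ring
        _ = 2 ^ s * t ^ (c + s/2 - 1) * Real.exp (-t) * R := by rw [e6]
        _ = 2 ^ s * R * (Real.exp (-t) * t ^ (c + s/2 - 1)) := by ring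
  have hcs : (0:ℝ) < c + s/2 := by positivity
  have hprodInt : Integrable (Function.uncurry K)
      ((volume.restrict (Set.Ioi (0:ℝ))).prod volume) := by
    rw [MeasureTheory.integrable_prod_iff hKmeas.aestronglyMeasurable]
    constructor
    · filter_upwards [ae_restrict_mem measurableSet_Ioi] with t ht
      exact (hslice t ht).1
    · refine (((Real.GammaIntegral_convergent hcs).const_mul (2 ^ s * R)).congr ?_)
      filter_upwards [ae_restrict_mem measurableSet_Ioi] with t ht
      have h1 : (∫ y : E, ‖Function.uncurry K (t, y)‖) = ∫ y : E, K t y := by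
        apply integral_congr_ae
        exact Filter.Eventually.of_forall fun y => norm_of_nonneg (hKnn t ht y)
      rw [h1, (hslice t ht).2]
  have hswap := MeasureTheory.integral_integral_swap hprodInt
  have hLHS : (∫ t in Set.Ioi (0:ℝ), ∫ y : E, K t y) = 2 ^ s * R * Real.Gamma (c + s/2) := by
    rw [setIntegral_congr_fun measurableSet_Ioi (fun t ht => (hslice t ht).2),
      MeasureTheory.integral_const_mul, ← Real.Gamma_eq_integral hcs]
  have hΓc : Real.Gamma c ≠ 0 := (Real.Gamma_pos_of_pos hc).ne'
  have hΓd : Real.Gamma ((d:ℝ)/2) ≠ 0 := by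
    have hd1 : (1:ℝ) ≤ (d:ℝ) := by exact_mod_cast hd
    exact (Real.Gamma_pos_of_pos (by positivity)).ne'
  constructor
  · exact ((hprodInt.integral_prod_right).const_mul (1/Real.Gamma c)).congr
      (Filter.Eventually.of_forall fun y => (hptwise y).symm)
  · calc ∫ y : E, besselKernel d (2*c) y * ‖y‖ ^ s
        = ∫ y : E, (1 / Real.Gamma c) * ∫ t in Set.Ioi (0:ℝ), K t y := by
          exact integral_congr_ae (Filter.Eventually.of_forall hptwise)
      _ = (1 / Real.Gamma c) * ∫ y : E, ∫ t in Set.Ioi (0:ℝ), K t y :=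
          MeasureTheory.integral_const_mul _ _
      _ = (1 / Real.Gamma c) * ∫ t in Set.Ioi (0:ℝ), ∫ y : E, K t y := by rw [← hswap]
      _ = (1 / Real.Gamma c) * (2 ^ s * R * Real.Gamma (c + s/2)) := by rw [hLHS]
      _ = 2 ^ s * Real.Gamma (((d:ℝ)+s)/2) / Real.Gamma ((d:ℝ)/2) *
            (Real.Gamma (c + s/2) / Real.Gamma c) := by
          rw [hR]; field_simp

section Summability

lemma prod_Icc_cast_factorial (m : ℕ) :
    (∏ k ∈ Finset.Icc 1 m, (k:ℝ)) = (Nat.factorial m : ℝ) := by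
  induction m with
  | zero => simp
  | succ n ih =>
    rw [Finset.prod_Icc_succ_top (by omega), ih, Nat.factorial_succ]
    push_cast
    ring

lemma log_le_sum_Icc : ∀ n : ℕ, 1 ≤ n → Real.log n ≤ ∑ k ∈ Finset.Icc 1 (n-1), (1:ℝ)/k := by
  intro n
  induction n with
  | zero => intro h; exact absurd h (by norm_num)
  | succ m ih =>
    intro _
    rcases Nat.eq_zero_or_pos m with hm | hm
    · subst hm; simp
    · have ihm := ih hm
      have hm0 : (0:ℝ) < m := by exact_mod_cast hm
      have key : Real.log ((m:ℝ)+1) ≤ Real.log m + 1/m := by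
        have h2 : Real.log (((m:ℝ)+1)/m) ≤ ((m:ℝ)+1)/m - 1 :=
          Real.log_le_sub_one_of_pos (by positivity)
        rw [Real.log_div (by positivity) (ne_of_gt hm0)] at h2
        have h3 : ((m:ℝ)+1)/m - 1 = 1/m := by field_simp; ring
        rw [h3] at h2
        linarith
      have hsum : ∑ k ∈ Finset.Icc 1 m, (1:ℝ)/k
          = (∑ k ∈ Finset.Icc 1 (m-1), (1:ℝ)/k) + 1/m := by
        conv_lhs => rw [show m = (m-1)+1 from (Nat.sub_add_cancel hm).symm]
        rw [Finset.sum_Icc_succ_top (by omega), Nat.sub_add_cancel hm]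
      have hcast : Real.log ((m+1 : ℕ):ℝ) = Real.log ((m:ℝ)+1) := by push_cast; ring_nf
      rw [show (m + 1) - 1 = m from rfl, hcast, hsum]
      linarith

lemma Gamma_ratio_le {h x : ℝ} (h0 : 0 ≤ h) (h1 : h ≤ 1) (hx : 1 ≤ x) :
    Real.Gamma (x + h) ≤ Real.Gamma x * x ^ h := by
  have hx0 : 0 < x := lt_of_lt_of_le one_pos hx
  have hG : 0 < Real.Gamma x := Real.Gamma_pos_of_pos hx0
  have hmem1 : x ∈ Set.Ioi (0:ℝ) := hx0
  have hmem2 : x + 1 ∈ Set.Ioi (0:ℝ) := by simp only [Set.mem_Ioi]; linarith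
  have hcvx := Real.convexOn_log_Gamma.2 hmem1 hmem2
    (by linarith : (0:ℝ) ≤ 1 - h) h0 (by ring)
  simp only [smul_eq_mul, Function.comp_apply] at hcvx
  rw [show (1-h)*x + h*(x+1) = x + h by ring] at hcvx
  rw [Real.Gamma_add_one hx0.ne', Real.log_mul hx0.ne' hG.ne'] at hcvx
  have hlog : Real.log (Real.Gamma (x+h)) ≤ Real.log (Real.Gamma x * x ^ h) := by
    rw [Real.log_mul hG.ne' (Real.rpow_pos_of_pos hx0 h).ne', Real.log_rpow hx0]
    nlinarith
  have hpos : 0 < Real.Gamma (x + h) := Real.Gamma_pos_of_pos (by linarith)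
  exact (Real.log_le_log_iff hpos (by positivity)).mp hlog

lemma aCoeff_nonneg {α : ℝ} (h0 : 0 < α) (h1 : α ≤ 1) (n : ℕ) : 0 ≤ aCoeff α n := by
  unfold aCoeff
  apply div_nonneg _ (Nat.cast_nonneg _)
  apply mul_nonneg (by linarith)
  apply Finset.prod_nonneg
  intro k hk
  have hk1 : 1 ≤ k := (Finset.mem_Icc.mp hk).1
  have hk1' : (1:ℝ) ≤ (k:ℝ) := by exact_mod_cast hk1
  linarith

lemma aCoeff_le {α : ℝ} (h0 : 0 < α) (h1 : α ≤ 1) (n : ℕ) (hn : 1 ≤ n) :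
    aCoeff α n ≤ (α/2) * ((n:ℝ) ^ (-(α/2)) / n) := by
  have hn0 : (0:ℝ) < n := by exact_mod_cast hn
  have hP : (∏ k ∈ Finset.Icc 1 (n-1), ((k : ℝ) - α / 2))
      ≤ (Nat.factorial (n-1) : ℝ) * (n:ℝ) ^ (-(α/2)) := by
    have step1 : (∏ k ∈ Finset.Icc 1 (n-1), ((k : ℝ) - α / 2))
        ≤ ∏ k ∈ Finset.Icc 1 (n-1), ((k:ℝ) * Real.exp (-(α/2 * (1/k)))) := by
      apply Finset.prod_le_prod
      · intro k hk
        have hk1 : 1 ≤ k := (Finset.mem_Icc.mp hk).1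
        have hk1' : (1:ℝ) ≤ (k:ℝ) := by exact_mod_cast hk1
        linarith
      · intro k hk
        have hk1 : 1 ≤ k := (Finset.mem_Icc.mp hk).1
        have hk1' : (1:ℝ) ≤ (k:ℝ) := by exact_mod_cast hk1
        have hkpos : (0:ℝ) < k := by linarith
        have hexp : 1 - α/2 * (1/k) ≤ Real.exp (-(α/2 * (1/k))) := by
          have := Real.add_one_le_exp (-(α/2 * (1/(k:ℝ))))
          linarith
        have hmul := mul_le_mul_of_nonneg_left hexp hkpos.le
        have hkk : (k:ℝ) * (1 - α/2*(1/k)) = k - α/2 := by field_simp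
        calc (k:ℝ) - α/2 = k * (1 - α/2*(1/k)) := hkk.symm
          _ ≤ k * Real.exp (-(α/2*(1/k))) := hmul
    have step2 : (∏ k ∈ Finset.Icc 1 (n-1), ((k:ℝ) * Real.exp (-(α/2 * (1/k)))))
        = (Nat.factorial (n-1) : ℝ) *
            Real.exp (-(α/2 * ∑ k ∈ Finset.Icc 1 (n-1), (1:ℝ)/k)) := by
      rw [Finset.prod_mul_distrib, prod_Icc_cast_factorial, ← Real.exp_sum]
      congr 2
      rw [Finset.sum_neg_distrib, Finset.mul_sum]
    have step3 : Real.exp (-(α/2 * ∑ k ∈ Finset.Icc 1 (n-1), (1:ℝ)/k)) ≤ (n:ℝ) ^ (-(α/2)) := by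
      rw [Real.rpow_def_of_pos hn0]
      apply Real.exp_le_exp.mpr
      have hlog := log_le_sum_Icc n hn
      nlinarith [mul_le_mul_of_nonneg_left hlog (show (0:ℝ) ≤ α/2 by linarith)]
    calc (∏ k ∈ Finset.Icc 1 (n-1), ((k : ℝ) - α / 2))
        ≤ ∏ k ∈ Finset.Icc 1 (n-1), ((k:ℝ) * Real.exp (-(α/2 * (1/k)))) := step1
      _ = (Nat.factorial (n-1) : ℝ) *
            Real.exp (-(α/2 * ∑ k ∈ Finset.Icc 1 (n-1), (1:ℝ)/k)) := step2
      _ ≤ (Nat.factorial (n-1) : ℝ) * (n:ℝ) ^ (-(α/2)) :=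
          mul_le_mul_of_nonneg_left step3 (Nat.cast_nonneg _)
  have hfact : (Nat.factorial n : ℝ) = n * Nat.factorial (n-1) := by
    exact_mod_cast (Nat.mul_factorial_pred (Nat.one_le_iff_ne_zero.mp hn)).symm
  have hfpos : (0:ℝ) < Nat.factorial (n-1) := by exact_mod_cast Nat.factorial_pos _
  unfold aCoeff
  rw [hfact]
  have hnum : α / 2 * (∏ k ∈ Finset.Icc 1 (n-1), ((k : ℝ) - α / 2))
      ≤ α / 2 * ((Nat.factorial (n-1) : ℝ) * (n:ℝ) ^ (-(α/2))) :=
    mul_le_mul_of_nonneg_left hP (by linarith)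
  calc α / 2 * (∏ k ∈ Finset.Icc 1 (n-1), ((k : ℝ) - α / 2)) / ((n:ℝ) * Nat.factorial (n-1))
      ≤ α / 2 * ((Nat.factorial (n-1) : ℝ) * (n:ℝ) ^ (-(α/2))) / ((n:ℝ) * Nat.factorial (n-1)) :=
        by rw [div_eq_mul_inv, div_eq_mul_inv]
           exact mul_le_mul_of_nonneg_right hnum (by positivity)
    _ = (α/2) * ((n:ℝ) ^ (-(α/2)) / n) := by field_simp

end Summability

lemma summable_moment {α s : ℝ} (h0 : 0 < α) (h1 : α ≤ 1) (hs0 : 0 ≤ s) (hsα : s < α) :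
    Summable (fun j : ℕ =>
      aCoeff α (j+1) * (Real.Gamma (((j:ℝ)+1) + s/2) / Real.Gamma ((j:ℝ)+1))) := by
  set p : ℝ := 1 + α/2 - s/2 with hp
  have hp1 : 1 < p := by rw [hp]; linarith
  have hsum : Summable (fun n : ℕ => ((n:ℝ) ^ p)⁻¹) := Real.summable_nat_rpow_inv.mpr hp1
  have hsum1 : Summable (fun j : ℕ => (α/2) * ((((j+1:ℕ)):ℝ) ^ p)⁻¹) :=
    ((summable_nat_add_iff 1).mpr hsum).mul_left _
  apply Summable.of_nonneg_of_le _ _ hsum1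
  · intro j
    apply mul_nonneg (aCoeff_nonneg h0 h1 _)
    have g1 := Real.Gamma_pos_of_pos (show (0:ℝ) < (j:ℝ)+1 by positivity)
    have g2 := Real.Gamma_pos_of_pos (show (0:ℝ) < (j:ℝ)+1+s/2 by positivity)
    positivity
  · intro j
    have hcast : (((j+1:ℕ)):ℝ) = (j:ℝ) + 1 := by push_cast; ring
    have hn1 : (1:ℝ) ≤ (j:ℝ)+1 := by have : (0:ℝ) ≤ (j:ℝ) := Nat.cast_nonneg j; linarith
    have hn0 : (0:ℝ) < (j:ℝ)+1 := by positivity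
    have hGr : Real.Gamma (((j:ℝ)+1) + s/2) / Real.Gamma ((j:ℝ)+1) ≤ ((j:ℝ)+1) ^ (s/2) := by
      rw [div_le_iff₀ (Real.Gamma_pos_of_pos hn0)]
      rw [mul_comm]
      exact Gamma_ratio_le (by linarith) (by linarith) hn1
    have ha := aCoeff_le h0 h1 (j+1) (by omega)
    rw [hcast] at ha
    have hterm : aCoeff α (j+1) * (Real.Gamma (((j:ℝ)+1) + s/2) / Real.Gamma ((j:ℝ)+1))
        ≤ ((α/2) * (((j:ℝ)+1) ^ (-(α/2)) / ((j:ℝ)+1))) * ((j:ℝ)+1) ^ (s/2) := by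
      apply mul_le_mul ha hGr
      · exact div_nonneg (Real.Gamma_pos_of_pos (by positivity)).le
          (Real.Gamma_pos_of_pos hn0).le
      · positivity
    have halg : ((α/2) * (((j:ℝ)+1) ^ (-(α/2)) / ((j:ℝ)+1))) * ((j:ℝ)+1) ^ (s/2)
        = (α/2) * ((((j:ℝ)+1) : ℝ) ^ p)⁻¹ := by
      have hkey : (((j:ℝ)+1) ^ (-(α/2)) * (((j:ℝ)+1))⁻¹) * ((j:ℝ)+1) ^ (s/2)
          = ((((j:ℝ)+1) : ℝ) ^ p)⁻¹ := by
        rw [← Real.rpow_neg_one ((j:ℝ)+1), ← Real.rpow_add hn0, ← Real.rpow_add hn0,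
          ← Real.rpow_neg hn0.le]
        congr 1
        rw [hp]; ring
      calc ((α/2) * (((j:ℝ)+1) ^ (-(α/2)) / ((j:ℝ)+1))) * ((j:ℝ)+1) ^ (s/2)
          = (α/2) * ((((j:ℝ)+1) ^ (-(α/2)) * (((j:ℝ)+1))⁻¹) * ((j:ℝ)+1) ^ (s/2)) := by
            rw [div_eq_mul_inv]; ring
        _ = (α/2) * ((((j:ℝ)+1) : ℝ) ^ p)⁻¹ := by rw [hkey]
    rw [hcast]
    exact hterm.trans (le_of_eq halg)


/-- (i) The moment formula
`∫ G_{2j}(y)|y|^s dy = (2^s Γ((d+s)/2)/Γ(d/2))·(Γ(j+s/2)/Γ(j))` for `j ≥ 1`, `s ≥ 0`;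
(ii) for `0 < α ≤ 1` and `0 ≤ s < α` the integral `∫ A_{α,1}(y)|y|^s dy`, which equals
`∑_{j≥1} a_{α,j} ∫ G_{2j}(y)|y|^s dy`, is finite. -/
theorem bessel_kernel_moments (d : ℕ) (hd : 1 ≤ d) :
    (∀ j : ℕ, 1 ≤ j → ∀ s : ℝ, 0 ≤ s →
      ∫ y : EuclideanSpace ℝ (Fin d), besselKernel d (2 * j) y * ‖y‖ ^ s =
        (2 ^ s * Real.Gamma (((d : ℝ) + s) / 2) / Real.Gamma ((d : ℝ) / 2)) *
          (Real.Gamma ((j : ℝ) + s / 2) / Real.Gamma (j : ℝ))) ∧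
    (∀ α : ℝ, 0 < α → α ≤ 1 → ∀ s : ℝ, 0 ≤ s → s < α →
      Integrable (fun y : EuclideanSpace ℝ (Fin d) => AKernel d α 1 y * ‖y‖ ^ s) volume ∧
      ∫ y : EuclideanSpace ℝ (Fin d), AKernel d α 1 y * ‖y‖ ^ s =
        ∑' j : ℕ, aCoeff α (j + 1) *
          ∫ y : EuclideanSpace ℝ (Fin d), besselKernel d (2 * (j + 1)) y * ‖y‖ ^ s) := by
  constructor
  · intro j hj s hs
    have hjR : (0:ℝ) < (j:ℝ) := by exact_mod_cast Nat.lt_of_lt_of_le Nat.zero_lt_one hj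
    exact (bessel_moment hd hjR hs).2
  · intro α hα0 hα1 s hs0 hsα
    set E := EuclideanSpace ℝ (Fin d) with hE
    set f : ℕ → E → ℝ := fun j y =>
      aCoeff α (j+1) * (besselKernel d (2*((j:ℝ)+1)) y * ‖y‖ ^ s) with hfdef
    have hmom : ∀ j : ℕ,
        Integrable (fun y : E => besselKernel d (2*((j:ℝ)+1)) y * ‖y‖ ^ s) ∧
        ∫ y : E, besselKernel d (2*((j:ℝ)+1)) y * ‖y‖ ^ s
          = 2 ^ s * Real.Gamma (((d:ℝ)+s)/2) / Real.Gamma ((d:ℝ)/2) *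
              (Real.Gamma (((j:ℝ)+1) + s/2) / Real.Gamma ((j:ℝ)+1)) :=
      fun j => bessel_moment hd (by positivity) hs0
    have hfint : ∀ j, Integrable (f j) := fun j => ((hmom j).1.const_mul _)
    have hfnn : ∀ j y, 0 ≤ f j y := by
      intro j y
      apply mul_nonneg (aCoeff_nonneg hα0 hα1 _)
      apply mul_nonneg (besselKernel_nonneg d (by positivity) y)
        (Real.rpow_nonneg (norm_nonneg y) _)
    have hfmeas : ∀ j, Measurable (f j) := fun j =>
      (((besselKernel_measurable d _).mul
        ((measurable_norm).pow measurable_const)).const_mul _)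
    have hintval : ∀ j, ∫ y : E, f j y
        = aCoeff α (j+1) * ∫ y : E, besselKernel d (2*((j:ℝ)+1)) y * ‖y‖ ^ s :=
      fun j => MeasureTheory.integral_const_mul _ _
    have hS : Summable (fun j : ℕ => ∫ y : E, f j y) := by
      apply Summable.congr ((summable_moment hα0 hα1 hs0 hsα).mul_left
        (2 ^ s * Real.Gamma (((d:ℝ)+s)/2) / Real.Gamma ((d:ℝ)/2)))
      intro j
      rw [hintval j, (hmom j).2]
      ring
    have hlint : ∀ j, (∫⁻ y : E, ‖f j y‖₊) = ENNReal.ofReal (∫ y : E, f j y) := by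
      intro j
      have h1 : (fun y : E => (‖f j y‖₊ : ℝ≥0∞)) = fun y => ENNReal.ofReal (f j y) :=
        funext fun y => Real.enorm_eq_ofReal (hfnn j y)
      rw [h1, ← MeasureTheory.ofReal_integral_eq_lintegral_ofReal (hfint j)
        (Filter.Eventually.of_forall (hfnn j))]
    have hne : (∑' j : ℕ, ∫⁻ y : E, ‖f j y‖₊) ≠ ⊤ := by
      rw [tsum_congr hlint, ← ENNReal.ofReal_tsum_of_nonneg
        (fun j => integral_nonneg (hfnn j)) hS]
      exact ENNReal.ofReal_ne_top
    have hptw : ∀ y : E, AKernel d α 1 y * ‖y‖ ^ s = ∑' j : ℕ, f j y := by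
      intro y
      simp only [AKernel, one_pow, one_mul, one_smul]
      rw [← tsum_mul_right]
      exact tsum_congr fun j => (mul_assoc _ _ _)
    have hGmeas : Measurable (fun y : E => ∑' j : ℕ, f j y) := by
      have h2 : (fun y : E => ∑' j : ℕ, f j y)
          = fun y => (∑' j : ℕ, ENNReal.ofReal (f j y)).toReal := by
        funext y
        by_cases hsum : Summable (fun j : ℕ => f j y)
        · rw [← ENNReal.ofReal_tsum_of_nonneg (fun j => hfnn j y) hsum,
            ENNReal.toReal_ofReal (tsum_nonneg fun j => hfnn j y)]
        · rw [tsum_eq_zero_of_not_summable hsum]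
          have htop : (∑' j : ℕ, ENNReal.ofReal (f j y)) = ⊤ := by
            by_contra hne2
            exact hsum ((ENNReal.summable_toReal hne2).congr
              (fun j => ENNReal.toReal_ofReal (hfnn j y)))
          rw [htop, ENNReal.toReal_top]
      rw [h2]
      exact (Measurable.ennreal_tsum (fun j => (hfmeas j).ennreal_ofReal)).ennreal_toReal
    have htarget_eq : (fun y : E => AKernel d α 1 y * ‖y‖ ^ s) = fun y => ∑' j : ℕ, f j y :=
      funext hptw
    constructor
    · refine ⟨(htarget_eq ▸ hGmeas.aestronglyMeasurable), ?_⟩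
      have hbound : (∫⁻ y : E, ‖AKernel d α 1 y * ‖y‖ ^ s‖₊)
          ≤ ∑' j : ℕ, ∫⁻ y : E, ‖f j y‖₊ := by
        calc (∫⁻ y : E, (‖AKernel d α 1 y * ‖y‖ ^ s‖₊ : ℝ≥0∞))
            = ∫⁻ y : E, ENNReal.ofReal (∑' j : ℕ, f j y) := by
              apply lintegral_congr
              intro y
              rw [hptw y, ← enorm_eq_nnnorm, Real.enorm_eq_ofReal (tsum_nonneg fun j => hfnn j y)]
          _ ≤ ∫⁻ y : E, ∑' j : ℕ, ENNReal.ofReal (f j y) := by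
              apply lintegral_mono
              intro y
              show ENNReal.ofReal (∑' j : ℕ, f j y) ≤ ∑' j : ℕ, ENNReal.ofReal (f j y)
              by_cases hsum : Summable (fun j : ℕ => f j y)
              · rw [ENNReal.ofReal_tsum_of_nonneg (fun j => hfnn j y) hsum]
              · rw [tsum_eq_zero_of_not_summable hsum]; simp
          _ = ∑' j : ℕ, ∫⁻ y : E, ENNReal.ofReal (f j y) :=
              lintegral_tsum fun j => ((hfmeas j).ennreal_ofReal).aemeasurable
          _ = ∑' j : ℕ, ∫⁻ y : E, ‖f j y‖₊ :=
              tsum_congr fun j => lintegral_congr fun y =>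
                (Real.enorm_eq_ofReal (hfnn j y)).symm
      exact lt_of_le_of_lt hbound hne.lt_top
    · have hswap := MeasureTheory.integral_tsum
        (fun j => (hfmeas j).aestronglyMeasurable) hne
      calc ∫ y : E, AKernel d α 1 y * ‖y‖ ^ s
          = ∫ y : E, ∑' j : ℕ, f j y := by rw [htarget_eq]
        _ = ∑' j : ℕ, ∫ y : E, f j y := hswap
        _ = ∑' j : ℕ, aCoeff α (j + 1) *
              ∫ y : E, besselKernel d (2*((j:ℝ)+1)) y * ‖y‖ ^ s := tsum_congr hintval

end
end

section
/- Let d ≥ 1, 0 < α ≤ 1, 1 ≤ p < ∞, x₀ ∈ ℝ^d and δ > 0. There is a constant C, depending only on α, d and p, such that for every f ∈ L^p(ℝ^d) that vanishes almost everywhere on the ball {x : |x − x₀| < δ}, and every μ with μδ > 1, |E_{α,μ} f(x₀)| = |(A_{α,μ} ⋆ f)(x₀)| ≤ C·μ^{−α/2}·δ^{−(d/p + α/2)}·‖f‖_{L^p}. In particular, if f ∈ L^p vanishes a.e. near x₀, then E_{α,μ} f(x₀) = O(μ^{−α/2}) as μ → ∞. -/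
open MeasureTheory Real
open scoped ENNReal

noncomputable section

namespace LocalizationAux


lemma aCoeff_nonneg {α : ℝ} (hα : 0 < α) (hα1 : α ≤ 1) (j : ℕ) : 0 ≤ aCoeff α j := by
  unfold aCoeff
  apply div_nonneg _ (by positivity)
  apply mul_nonneg (by linarith)
  apply Finset.prod_nonneg
  intro k hk
  simp only [Finset.mem_Icc] at hk
  have : (1:ℝ) ≤ k := by exact_mod_cast hk.1
  linarith

lemma aCoeff_succ {α : ℝ} (j : ℕ) :
    aCoeff α (j + 2) = aCoeff α (j + 1) * (((j:ℝ) + 1) - α / 2) / ((j:ℝ) + 2) := by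
  unfold aCoeff
  have h1 : (j + 2) - 1 = (j + 1 - 1) + 1 := by omega
  rw [h1, Finset.prod_Icc_succ_top (by omega)]
  have h2 : j + 1 - 1 = j := by omega
  rw [h2, Nat.factorial_succ (j+1)]
  have h4 : ((Nat.factorial (j+1) : ℝ)) ≠ 0 := by positivity
  field_simp
  push_cast
  ring

def bseq (α : ℝ) (j : ℕ) : ℝ :=
  aCoeff α (j + 1) * Real.Gamma ((j:ℝ) + 1 + α / 4) / (Nat.factorial j)

lemma bseq_nonneg {α : ℝ} (hα : 0 < α) (hα1 : α ≤ 1) (j : ℕ) : 0 ≤ bseq α j := by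
  unfold bseq
  have h1 : 0 < Real.Gamma ((j:ℝ) + 1 + α / 4) :=
    Real.Gamma_pos_of_pos (by positivity)
  have h2 := aCoeff_nonneg hα hα1 (j+1)
  positivity

lemma bseq_succ {α : ℝ} (hα : 0 < α) (j : ℕ) :
    bseq α (j + 1) =
      bseq α j * ((((j:ℝ) + 1) - α / 2) * (((j:ℝ) + 1) + α / 4)) /
        ((((j:ℝ) + 2)) * ((j:ℝ) + 1)) := by
  unfold bseq
  rw [aCoeff_succ]
  have h0 : ((j:ℝ) + 1 + α / 4) ≠ 0 := by positivity
  have h1 : ((j + 1 : ℕ) : ℝ) + 1 + α / 4 = ((j:ℝ) + 1 + α / 4) + 1 := by push_cast; ring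
  rw [h1, Real.Gamma_add_one h0, Nat.factorial_succ j]
  have h4 : ((Nat.factorial j : ℝ)) ≠ 0 := by positivity
  have h5 : ((j:ℝ) + 2) ≠ 0 := by positivity
  have h6 : ((j:ℝ) + 1) ≠ 0 := by positivity
  push_cast
  field_simp

lemma bseq_step {α : ℝ} (hα : 0 < α) (hα1 : α ≤ 1) (j : ℕ) :
    α / 4 * bseq α j ≤
      ((j:ℝ) + 1) * bseq α j - ((j:ℝ) + 2) * bseq α (j + 1) := by
  have hb := bseq_nonneg hα hα1 j
  have hx : (0:ℝ) < (j:ℝ) + 1 := by positivity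
  have h1 : ((j:ℝ) + 2) * bseq α (j + 1) =
      bseq α j * ((((j:ℝ) + 1) - α / 2) * (((j:ℝ) + 1) + α / 4)) / ((j:ℝ) + 1) := by
    rw [bseq_succ hα]
    field_simp
  rw [h1]
  have key : bseq α j * ((((j:ℝ) + 1) - α / 2) * (((j:ℝ) + 1) + α / 4)) / ((j:ℝ) + 1) ≤
      (((j:ℝ) + 1) - α / 4) * bseq α j := by
    rw [div_le_iff₀ hx]
    nlinarith [mul_nonneg hb (mul_nonneg hα.le hα.le)]
  linarith

lemma sum_bseq_le {α : ℝ} (hα : 0 < α) (hα1 : α ≤ 1) (N : ℕ) :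
    ∑ j ∈ Finset.range N, bseq α j ≤ 4 / α * bseq α 0 := by
  have h2 : ∑ j ∈ Finset.range N, (α / 4 * bseq α j) ≤
      ∑ j ∈ Finset.range N,
        ((fun i : ℕ => ((i:ℝ) + 1) * bseq α i) j - (fun i : ℕ => ((i:ℝ) + 1) * bseq α i) (j + 1)) := by
    apply Finset.sum_le_sum
    intro j _
    have := bseq_step hα hα1 j
    simp only []
    push_cast
    linarith
  rw [Finset.sum_range_sub' (fun i : ℕ => ((i:ℝ) + 1) * bseq α i) N] at h2
  simp only [Nat.cast_zero] at h2
  rw [← Finset.mul_sum] at h2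
  have hN : 0 ≤ ((N:ℝ) + 1) * bseq α N :=
    mul_nonneg (by positivity) (bseq_nonneg hα hα1 N)
  have h3 : α / 4 * ∑ j ∈ Finset.range N, bseq α j ≤ bseq α 0 := by linarith
  calc ∑ j ∈ Finset.range N, bseq α j ≤ bseq α 0 / (α / 4) :=
        (le_div_iff₀ (by positivity)).mpr (by linarith)
    _ = 4 / α * bseq α 0 := by field_simp

lemma summable_bseq {α : ℝ} (hα : 0 < α) (hα1 : α ≤ 1) : Summable (bseq α) :=
  summable_of_sum_range_le (bseq_nonneg hα hα1) (sum_bseq_le hα hα1)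

lemma tsum_bseq_le {α : ℝ} (hα : 0 < α) (hα1 : α ≤ 1) :
    ∑' j, bseq α j ≤ 4 / α * bseq α 0 :=
  Real.tsum_le_of_sum_range_le (bseq_nonneg hα hα1) (sum_bseq_le hα hα1)

lemma rpow_mul_exp_neg_le {m : ℝ} (hm : 0 ≤ m) {u : ℝ} (hu : 0 < u) :
    u ^ m * Real.exp (-u) ≤ (Nat.ceil m).factorial + 1 := by
  rcases le_or_gt u 1 with h1 | h1
  · have e1 : u ^ m ≤ 1 := Real.rpow_le_one hu.le h1 hm
    have e2 : Real.exp (-u) ≤ 1 := Real.exp_le_one_iff.mpr (by linarith)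
    have : u ^ m * Real.exp (-u) ≤ 1 := by
      calc u ^ m * Real.exp (-u) ≤ 1 * 1 :=
        mul_le_mul e1 e2 (Real.exp_pos _).le zero_le_one
      _ = 1 := by ring
    have h0 : (0:ℝ) ≤ (Nat.ceil m).factorial := by positivity
    linarith
  · set M := Nat.ceil m with hM
    have e1 : u ^ m ≤ u ^ (M:ℕ) := by
      rw [← Real.rpow_natCast u M]
      exact Real.rpow_le_rpow_of_exponent_le h1.le (Nat.le_ceil m)
    have e2 : u ^ (M:ℕ) ≤ (M.factorial : ℝ) * Real.exp u := by
      have := Real.pow_div_factorial_le_exp (x := u) (by linarith) M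
      rw [div_le_iff₀ (by positivity : (0:ℝ) < ((M.factorial : ℝ) : ℝ))] at this
      linarith [this]
    have e3 : u ^ m * Real.exp (-u) ≤ ((M.factorial : ℝ) : ℝ) := by
      have hexp : Real.exp (-u) = (Real.exp u)⁻¹ := by
        rw [Real.exp_neg]
      calc u ^ m * Real.exp (-u) ≤ ((M.factorial : ℝ) * Real.exp u) * Real.exp (-u) := by
            apply mul_le_mul_of_nonneg_right _ (Real.exp_pos _).le
            exact le_trans e1 e2
        _ = (M.factorial : ℝ) := by rw [hexp]; field_simp
    linarith



/-- the exponent `m` -/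
def mexp (d : ℕ) (α : ℝ) : ℝ := (d : ℝ) / 2 + α / 4

/-- the constant in the pointwise Bessel bound -/
def Kc (d : ℕ) (α : ℝ) : ℝ :=
  (4 * π) ^ (-(d : ℝ) / 2) * (((Nat.ceil (mexp d α)).factorial : ℝ) + 1) * 4 ^ (mexp d α)

lemma mexp_nonneg (d : ℕ) {α : ℝ} (hα : 0 < α) : 0 ≤ mexp d α := by
  unfold mexp; positivity

lemma Kc_pos (d : ℕ) {α : ℝ} (hα : 0 < α) : 0 < Kc d α := by
  unfold Kc
  have h1 : (0:ℝ) < 4 * π := by positivity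
  positivity

lemma besselKernel_nonneg {d : ℕ} {s : ℝ} (hs : 0 < s) (w : EuclideanSpace ℝ (Fin d)) :
    0 ≤ besselKernel d s w := by
  unfold besselKernel
  apply mul_nonneg
  · have := Real.Gamma_pos_of_pos (show 0 < s / 2 by positivity)
    positivity
  · apply MeasureTheory.setIntegral_nonneg measurableSet_Ioi
    intro t ht
    have ht' : (0:ℝ) < t := ht
    have h1 : (0:ℝ) < 4 * π * t := by positivity
    positivity

lemma besselKernel_le {d : ℕ} {α : ℝ} (hα : 0 < α) (hα1 : α ≤ 1) (j : ℕ)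
    {w : EuclideanSpace ℝ (Fin d)} (hw : w ≠ 0) :
    besselKernel d (2 * ((j:ℝ) + 1)) w ≤
      (Kc d α * (‖w‖ ^ 2) ^ (-(mexp d α))) *
        (Real.Gamma ((j:ℝ) + 1 + α / 4) / (Nat.factorial j)) := by
  have hm : 0 ≤ mexp d α := mexp_nonneg d hα
  have hnw : (0:ℝ) < ‖w‖ := norm_pos_iff.mpr hw
  have hn2 : (0:ℝ) < ‖w‖ ^ 2 := by positivity
  have hx : (0:ℝ) < (j:ℝ) + 1 + α / 4 := by positivity
  set m := mexp d α with hmdef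
  set cm : ℝ := ((Nat.ceil m).factorial : ℝ) + 1 with hcm
  have hcm0 : (0:ℝ) < cm := by positivity
  set K1 : ℝ := (4 * π) ^ (-(d : ℝ) / 2) * cm * 4 ^ m * (‖w‖ ^ 2) ^ (-m) with hK1
  -- pointwise bound on the integrand
  have hpt : ∀ t ∈ Set.Ioi (0:ℝ),
      (4 * π * t) ^ (-(d : ℝ) / 2) * Real.exp (-‖w‖ ^ 2 / (4 * t)) * Real.exp (-t) *
          t ^ ((2 * ((j:ℝ) + 1)) / 2 - 1) ≤
        K1 * (Real.exp (-t) * t ^ (((j:ℝ) + 1 + α / 4) - 1)) := by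
    intro t ht
    have ht' : (0:ℝ) < t := ht
    have h4t : (0:ℝ) < 4 * t := by positivity
    have hu : (0:ℝ) < ‖w‖ ^ 2 / (4 * t) := by positivity
    -- exp bound
    have hexp : Real.exp (-(‖w‖ ^ 2 / (4 * t))) ≤
        cm * ((‖w‖ ^ 2) ^ (-m) * (4 * t) ^ m) := by
      have h := rpow_mul_exp_neg_le hm hu
      have hid : Real.exp (-(‖w‖ ^ 2 / (4 * t))) =
          (‖w‖ ^ 2 / (4 * t)) ^ (-m) * ((‖w‖ ^ 2 / (4 * t)) ^ m *
            Real.exp (-(‖w‖ ^ 2 / (4 * t)))) := by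
        rw [← mul_assoc, ← Real.rpow_add hu]
        simp
      rw [hid]
      have hle : (‖w‖ ^ 2 / (4 * t)) ^ (-m) * ((‖w‖ ^ 2 / (4 * t)) ^ m *
            Real.exp (-(‖w‖ ^ 2 / (4 * t)))) ≤ (‖w‖ ^ 2 / (4 * t)) ^ (-m) * cm := by
        apply mul_le_mul_of_nonneg_left _ (Real.rpow_nonneg hu.le _)
        exact h
      refine hle.trans (le_of_eq ?_)
      have hbase : (‖w‖ ^ 2 / (4 * t)) ^ (-m) = (‖w‖ ^ 2) ^ (-m) * (4 * t) ^ m := by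
        rw [Real.rpow_neg hu.le, Real.div_rpow hn2.le h4t.le, Real.rpow_neg hn2.le, inv_div]
        ring
      rw [hbase]
      ring
    -- expand the base products
    have hsplit : (4 * π * t) ^ (-(d : ℝ) / 2) =
        (4 * π) ^ (-(d : ℝ) / 2) * t ^ (-(d : ℝ) / 2) := by
      rw [Real.mul_rpow (by positivity) ht'.le]
    have h4tm : (4 * t) ^ m = 4 ^ m * t ^ m := by
      rw [Real.mul_rpow (by norm_num) ht'.le]
    have hexpn : (2 * ((j:ℝ) + 1)) / 2 - 1 = (j:ℝ) := by ring
    have hpow : t ^ (-(d : ℝ) / 2) * t ^ m * t ^ ((j:ℝ)) =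
        t ^ (((j:ℝ) + 1 + α / 4) - 1) := by
      rw [← Real.rpow_add ht', ← Real.rpow_add ht']
      congr 1
      have : m = (d : ℝ) / 2 + α / 4 := hmdef
      rw [this]; ring
    calc (4 * π * t) ^ (-(d : ℝ) / 2) * Real.exp (-‖w‖ ^ 2 / (4 * t)) * Real.exp (-t) *
          t ^ ((2 * ((j:ℝ) + 1)) / 2 - 1)
        = (4 * π) ^ (-(d : ℝ) / 2) * t ^ (-(d : ℝ) / 2) *
            Real.exp (-(‖w‖ ^ 2 / (4 * t))) * Real.exp (-t) * t ^ ((j:ℝ)) := by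
          rw [hsplit, hexpn]
          ring_nf
      _ ≤ (4 * π) ^ (-(d : ℝ) / 2) * t ^ (-(d : ℝ) / 2) *
            (cm * ((‖w‖ ^ 2) ^ (-m) * (4 * t) ^ m)) * Real.exp (-t) * t ^ ((j:ℝ)) := by
          have hA : (0:ℝ) ≤ (4 * π) ^ (-(d : ℝ) / 2) * t ^ (-(d : ℝ) / 2) := by
            have : (0:ℝ) < 4 * π := by positivity
            positivity
          have hB : (0:ℝ) ≤ Real.exp (-t) * t ^ ((j:ℝ)) := by positivity
          calc (4 * π) ^ (-(d : ℝ) / 2) * t ^ (-(d : ℝ) / 2) *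
                Real.exp (-(‖w‖ ^ 2 / (4 * t))) * Real.exp (-t) * t ^ ((j:ℝ))
              = ((4 * π) ^ (-(d : ℝ) / 2) * t ^ (-(d : ℝ) / 2)) *
                Real.exp (-(‖w‖ ^ 2 / (4 * t))) * (Real.exp (-t) * t ^ ((j:ℝ))) := by ring
            _ ≤ ((4 * π) ^ (-(d : ℝ) / 2) * t ^ (-(d : ℝ) / 2)) *
                (cm * ((‖w‖ ^ 2) ^ (-m) * (4 * t) ^ m)) * (Real.exp (-t) * t ^ ((j:ℝ))) := by
                apply mul_le_mul_of_nonneg_right _ hB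
                exact mul_le_mul_of_nonneg_left hexp hA
            _ = (4 * π) ^ (-(d : ℝ) / 2) * t ^ (-(d : ℝ) / 2) *
                (cm * ((‖w‖ ^ 2) ^ (-m) * (4 * t) ^ m)) * Real.exp (-t) * t ^ ((j:ℝ)) := by
                ring
      _ = K1 * (Real.exp (-t) * t ^ (((j:ℝ) + 1 + α / 4) - 1)) := by
          rw [h4tm, ← hpow, hK1]
          ring
  -- integrate
  have hint : IntegrableOn (fun t => K1 * (Real.exp (-t) * t ^ (((j:ℝ) + 1 + α / 4) - 1)))
      (Set.Ioi (0:ℝ)) := (Real.GammaIntegral_convergent hx).const_mul K1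
  have hmono : (∫ t in Set.Ioi (0:ℝ),
      (4 * π * t) ^ (-(d : ℝ) / 2) * Real.exp (-‖w‖ ^ 2 / (4 * t)) * Real.exp (-t) *
          t ^ ((2 * ((j:ℝ) + 1)) / 2 - 1)) ≤
      ∫ t in Set.Ioi (0:ℝ), K1 * (Real.exp (-t) * t ^ (((j:ℝ) + 1 + α / 4) - 1)) := by
    apply MeasureTheory.integral_mono_of_nonneg
    · filter_upwards [MeasureTheory.ae_restrict_mem measurableSet_Ioi] with t ht
      have ht' : (0:ℝ) < t := ht
      have h1 : (0:ℝ) < 4 * π * t := by positivity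
      positivity
    · exact hint
    · filter_upwards [MeasureTheory.ae_restrict_mem measurableSet_Ioi] with t ht
      exact hpt t ht
  have hval : (∫ t in Set.Ioi (0:ℝ), K1 * (Real.exp (-t) * t ^ (((j:ℝ) + 1 + α / 4) - 1)))
      = K1 * Real.Gamma ((j:ℝ) + 1 + α / 4) := by
    rw [MeasureTheory.integral_const_mul, ← Real.Gamma_eq_integral hx]
  unfold besselKernel
  have hgam : Real.Gamma ((2 * ((j:ℝ) + 1)) / 2) = (Nat.factorial j : ℝ) := by
    have : (2 * ((j:ℝ) + 1)) / 2 = (j:ℝ) + 1 := by ring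
    rw [this, Real.Gamma_nat_eq_factorial]
  rw [hgam]
  have hfac : (0:ℝ) < (Nat.factorial j : ℝ) := by positivity
  have h2 : (∫ t in Set.Ioi (0:ℝ),
      (4 * π * t) ^ (-(d : ℝ) / 2) * Real.exp (-‖w‖ ^ 2 / (4 * t)) * Real.exp (-t) *
          t ^ ((2 * ((j:ℝ) + 1)) / 2 - 1)) ≤ K1 * Real.Gamma ((j:ℝ) + 1 + α / 4) := by
    rw [← hval]; exact hmono
  calc (1 / (Nat.factorial j : ℝ)) * ∫ t in Set.Ioi (0:ℝ),
        (4 * π * t) ^ (-(d : ℝ) / 2) * Real.exp (-‖w‖ ^ 2 / (4 * t)) * Real.exp (-t) *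
          t ^ ((2 * ((j:ℝ) + 1)) / 2 - 1)
      ≤ (1 / (Nat.factorial j : ℝ)) * (K1 * Real.Gamma ((j:ℝ) + 1 + α / 4)) :=
        mul_le_mul_of_nonneg_left h2 (by positivity)
    _ = (Kc d α * (‖w‖ ^ 2) ^ (-m)) * (Real.Gamma ((j:ℝ) + 1 + α / 4) / (Nat.factorial j)) := by
        rw [hK1]
        unfold Kc
        rw [← hmdef, ← hcm]
        ring

/-- the master constant for the kernel bound -/
def K2 (d : ℕ) (α : ℝ) : ℝ := Kc d α * (4 / α) * bseq α 0

lemma K2_nonneg {d : ℕ} {α : ℝ} (hα : 0 < α) (hα1 : α ≤ 1) : 0 ≤ K2 d α :=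
  mul_nonneg (mul_nonneg (Kc_pos d hα).le (by positivity)) (bseq_nonneg hα hα1 0)

lemma tsum_kernel_le {d : ℕ} {α : ℝ} (hα : 0 < α) (hα1 : α ≤ 1)
    {w : EuclideanSpace ℝ (Fin d)} (hw : w ≠ 0) :
    (∑' j : ℕ, aCoeff α (j + 1) * besselKernel d (2 * ((j:ℕ) + 1)) w) ≤
      K2 d α * (‖w‖ ^ 2) ^ (-(mexp d α)) := by
  have hterm : ∀ j : ℕ, aCoeff α (j + 1) * besselKernel d (2 * ((j:ℕ) + 1)) w ≤
      (Kc d α * (‖w‖ ^ 2) ^ (-(mexp d α))) * bseq α j := by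
    intro j
    have h1 := besselKernel_le (d := d) hα hα1 j hw
    have h2 := aCoeff_nonneg hα hα1 (j + 1)
    calc aCoeff α (j + 1) * besselKernel d (2 * ((j:ℕ) + 1)) w
        ≤ aCoeff α (j + 1) * ((Kc d α * (‖w‖ ^ 2) ^ (-(mexp d α))) *
            (Real.Gamma ((j:ℝ) + 1 + α / 4) / (Nat.factorial j))) :=
          mul_le_mul_of_nonneg_left h1 h2
      _ = (Kc d α * (‖w‖ ^ 2) ^ (-(mexp d α))) * bseq α j := by unfold bseq; ring
  have hnonneg : ∀ j : ℕ, 0 ≤ aCoeff α (j + 1) * besselKernel d (2 * ((j:ℕ) + 1)) w := by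
    intro j
    exact mul_nonneg (aCoeff_nonneg hα hα1 _)
      (besselKernel_nonneg (by positivity) w)
  have hsum2 : Summable (fun j : ℕ => (Kc d α * (‖w‖ ^ 2) ^ (-(mexp d α))) * bseq α j) :=
    (summable_bseq hα hα1).mul_left _
  have hsum1 : Summable (fun j : ℕ => aCoeff α (j + 1) * besselKernel d (2 * ((j:ℕ) + 1)) w) :=
    Summable.of_nonneg_of_le hnonneg hterm hsum2
  have hKX : 0 ≤ Kc d α * (‖w‖ ^ 2) ^ (-(mexp d α)) := by
    have := Kc_pos d hα
    positivity
  calc (∑' j : ℕ, aCoeff α (j + 1) * besselKernel d (2 * ((j:ℕ) + 1)) w)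
      ≤ ∑' j : ℕ, (Kc d α * (‖w‖ ^ 2) ^ (-(mexp d α))) * bseq α j :=
        Summable.tsum_le_tsum hterm hsum1 hsum2
    _ = (Kc d α * (‖w‖ ^ 2) ^ (-(mexp d α))) * ∑' j : ℕ, bseq α j := tsum_mul_left
    _ ≤ (Kc d α * (‖w‖ ^ 2) ^ (-(mexp d α))) * (4 / α * bseq α 0) :=
        mul_le_mul_of_nonneg_left (tsum_bseq_le hα hα1) hKX
    _ = K2 d α * (‖w‖ ^ 2) ^ (-(mexp d α)) := by unfold K2; ring

lemma AKernel_le {d : ℕ} {α μ : ℝ} (hα : 0 < α) (hα1 : α ≤ 1) (hμ : 0 < μ)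
    {z : EuclideanSpace ℝ (Fin d)} (hz : z ≠ 0) :
    AKernel d α μ z ≤ K2 d α * μ ^ (-(α / 2)) * ‖z‖ ^ (-((d:ℝ) + α / 2)) := by
  unfold AKernel
  have hμz : μ • z ≠ 0 := smul_ne_zero hμ.ne' hz
  have h1 := tsum_kernel_le hα hα1 (w := μ • z) (d := d)  hμz
  have hμd : (0:ℝ) ≤ μ ^ d := by positivity
  have h2 : μ ^ d * (∑' j : ℕ, aCoeff α (j + 1) * besselKernel d (2 * ((j:ℕ) + 1)) (μ • z)) ≤
      μ ^ d * (K2 d α * (‖μ • z‖ ^ 2) ^ (-(mexp d α))) :=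
    mul_le_mul_of_nonneg_left h1 hμd
  refine h2.trans (le_of_eq ?_)
  have hnz : (0:ℝ) < ‖z‖ := norm_pos_iff.mpr hz
  have hnorm : ‖μ • z‖ ^ 2 = μ ^ 2 * ‖z‖ ^ 2 := by
    rw [norm_smul, Real.norm_eq_abs, abs_of_pos hμ, mul_pow]
  rw [hnorm]
  have hsplit : (μ ^ 2 * ‖z‖ ^ 2) ^ (-(mexp d α)) =
      (μ ^ 2) ^ (-(mexp d α)) * (‖z‖ ^ 2) ^ (-(mexp d α)) := by
    rw [← Real.mul_rpow (by positivity) (by positivity)]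
  rw [hsplit]
  have e1 : (μ ^ 2) ^ (-(mexp d α)) = μ ^ ((2:ℝ) * (-(mexp d α))) := by
    rw [Real.rpow_mul hμ.le, Real.rpow_two]
  have e2 : (‖z‖ ^ 2) ^ (-(mexp d α)) = ‖z‖ ^ ((2:ℝ) * (-(mexp d α))) := by
    rw [Real.rpow_mul hnz.le, Real.rpow_two]
  have e3 : μ ^ d = μ ^ ((d:ℕ):ℝ) := by rw [Real.rpow_natCast]
  rw [e1, e2, e3]
  have e4 : μ ^ ((d:ℕ):ℝ) * (K2 d α * (μ ^ ((2:ℝ) * (-(mexp d α)))) *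
      ‖z‖ ^ ((2:ℝ) * (-(mexp d α)))) = K2 d α * (μ ^ ((d:ℕ):ℝ) * μ ^ ((2:ℝ) * (-(mexp d α)))) *
      ‖z‖ ^ ((2:ℝ) * (-(mexp d α))) := by ring
  have e5 : μ ^ ((d:ℕ):ℝ) * μ ^ ((2:ℝ) * (-(mexp d α))) = μ ^ (-(α / 2)) := by
    rw [← Real.rpow_add hμ]
    congr 1
    unfold mexp
    ring
  have e6 : ((2:ℝ) * (-(mexp d α))) = -((d:ℝ) + α / 2) := by unfold mexp; ring
  calc μ ^ ((d:ℕ):ℝ) * (K2 d α * ((μ ^ ((2:ℝ) * (-(mexp d α)))) *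
        ‖z‖ ^ ((2:ℝ) * (-(mexp d α))))) =
      K2 d α * (μ ^ ((d:ℕ):ℝ) * μ ^ ((2:ℝ) * (-(mexp d α)))) *
        ‖z‖ ^ ((2:ℝ) * (-(mexp d α))) := by ring
    _ = K2 d α * μ ^ (-(α / 2)) * ‖z‖ ^ (-((d:ℝ) + α / 2)) := by rw [e5, e6]

lemma AKernel_nonneg {d : ℕ} {α μ : ℝ} (hα : 0 < α) (hα1 : α ≤ 1) (hμ : 0 ≤ μ)
    (z : EuclideanSpace ℝ (Fin d)) : 0 ≤ AKernel d α μ z := by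
  unfold AKernel
  apply mul_nonneg (by positivity)
  apply tsum_nonneg
  intro j
  exact mul_nonneg (aCoeff_nonneg hα hα1 _) (besselKernel_nonneg (by positivity) _)

lemma tail_bound {β δ R : ℝ} (hβ : 0 ≤ β) (hδ : 0 < δ) (hR : δ ≤ R) :
    R ^ (-β) ≤ (1 + 1/δ) ^ β * (1 + R) ^ (-β) := by
  have hR0 : (0:ℝ) < R := lt_of_lt_of_le hδ hR
  have h1R : (0:ℝ) < 1 + R := by linarith
  have hkey : (1 + R) ^ β ≤ (1 + 1/δ) ^ β * R ^ β := by
    rw [← Real.mul_rpow (by positivity) hR0.le]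
    apply Real.rpow_le_rpow h1R.le _ hβ
    have h2 : (1:ℝ) ≤ R / δ := (one_le_div hδ).mpr hR
    calc 1 + R ≤ R/δ + R := by linarith
      _ = (1 + 1/δ) * R := by field_simp; ring
  have hp1 : (0:ℝ) < R ^ β := Real.rpow_pos_of_pos hR0 β
  have hp2 : (0:ℝ) < (1 + R) ^ β := Real.rpow_pos_of_pos h1R β
  rw [Real.rpow_neg hR0.le, Real.rpow_neg h1R.le, ← one_div, ← div_eq_mul_inv,
    div_le_div_iff₀ hp1 hp2]
  calc 1 * (1 + R) ^ β = (1 + R) ^ β := one_mul _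
    _ ≤ (1 + 1/δ) ^ β * R ^ β := hkey

/-- The main core estimate. -/
lemma core_estimate
    (d : ℕ) (α : ℝ) (hα : 0 < α) (hα1 : α ≤ 1)
    (p : ℝ≥0∞) (hp : 1 ≤ p) (hp' : p < ⊤)
    (x₀ : EuclideanSpace ℝ (Fin d)) (δ : ℝ) (hδ : 0 < δ) :
    ∃ C₀ : ℝ, 0 ≤ C₀ ∧
      ∀ f : EuclideanSpace ℝ (Fin d) → ℝ, MemLp f p volume →
        (∀ᵐ x : EuclideanSpace ℝ (Fin d) ∂volume, ‖x - x₀‖ < δ → f x = 0) →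
        ∀ μ : ℝ, 1 < μ * δ →
          |∫ y, AKernel d α μ (x₀ - y) * f y| ≤
            C₀ * μ ^ (-(α / 2)) * (eLpNorm f p volume).toReal := by
  classical
  set β : ℝ := (d:ℝ) + α / 2 with hβdef
  have hβ0 : (0:ℝ) ≤ β := by positivity
  have hp0 : p ≠ 0 := (lt_of_lt_of_le zero_lt_one hp).ne'
  obtain ⟨J, hJ0, hJholder⟩ :
      ∃ J : ℝ, 0 ≤ J ∧
        ∀ f : EuclideanSpace ℝ (Fin d) → ℝ, MemLp f p volume →
          (∫⁻ y, ENNReal.ofReal ((1 + ‖x₀ - y‖) ^ (-β)) * (‖f y‖₊ : ℝ≥0∞) ∂volume) ≤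
            ENNReal.ofReal J * eLpNorm f p volume := by
    rcases eq_or_lt_of_le hp with hp1 | hp1
    · -- p = 1
      refine ⟨1, zero_le_one, ?_⟩
      intro f hf
      have hbd : ∀ y : EuclideanSpace ℝ (Fin d),
          ENNReal.ofReal ((1 + ‖x₀ - y‖) ^ (-β)) * (‖f y‖₊ : ℝ≥0∞) ≤
            1 * (‖f y‖₊ : ℝ≥0∞) := by
        intro y
        apply mul_le_mul_left
        rw [show (1 : ℝ≥0∞) = ENNReal.ofReal 1 by simp]
        apply ENNReal.ofReal_le_ofReal
        apply Real.rpow_le_one_of_one_le_of_nonpos (by linarith [norm_nonneg (x₀ - y)]) (by linarith)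
      calc (∫⁻ y, ENNReal.ofReal ((1 + ‖x₀ - y‖) ^ (-β)) * (‖f y‖₊ : ℝ≥0∞) ∂volume)
          ≤ ∫⁻ y, 1 * (‖f y‖₊ : ℝ≥0∞) ∂volume := lintegral_mono hbd
        _ = ∫⁻ y, (‖f y‖₊ : ℝ≥0∞) ∂volume := by simp
        _ = eLpNorm f 1 volume := (eLpNorm_one_eq_lintegral_enorm (f := f) (μ := volume)).symm
        _ = ENNReal.ofReal 1 * eLpNorm f p volume := by rw [← hp1]; simp
    · -- 1 < p
      set r : ℝ := p.toReal with hrdef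
      have hr1 : 1 < r := by
        rw [hrdef]
        have h1 : (1:ℝ≥0∞).toReal < p.toReal :=
          (ENNReal.toReal_lt_toReal (by simp) hp'.ne).mpr hp1
        simpa using h1
      set q : ℝ := r / (r - 1) with hqdef
      have hconj : r.HolderConjugate q := Real.HolderConjugate.conjExponent hr1
      have hqr : q.HolderConjugate r := hconj.symm
      have hq1 : 1 < q := (Real.holderConjugate_iff.mp hqr).1
      have hβq : (d:ℝ) < β * q := by
        have h1 : β ≤ β * q := le_mul_of_one_le_right hβ0 hq1.le
        have h2 : (d:ℝ) < β := by rw [hβdef]; linarith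
        linarith
      have hint : Integrable (fun z : EuclideanSpace ℝ (Fin d) => (1 + ‖z‖) ^ (-(β * q)))
          volume := by
        apply integrable_one_add_norm
        rw [finrank_euclideanSpace_fin]
        exact hβq
      have hint2 : Integrable (fun y : EuclideanSpace ℝ (Fin d) =>
          (1 + ‖x₀ - y‖) ^ (-(β * q))) volume := hint.comp_sub_left x₀
      set B : ℝ≥0∞ := ∫⁻ y, ENNReal.ofReal ((1 + ‖x₀ - y‖) ^ (-(β * q))) ∂volume with hBdef
      have hBlt : B < ⊤ := by
        have h1 : B = ∫⁻ y, (‖(1 + ‖x₀ - y‖) ^ (-(β * q))‖₊ : ℝ≥0∞) ∂volume := by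
          apply lintegral_congr
          intro y
          rw [← enorm_eq_nnnorm, ← ofReal_norm, Real.norm_eq_abs,
            abs_of_nonneg (Real.rpow_nonneg (by positivity) _)]
        rw [h1]
        exact hint2.2
      set Jnn : ℝ≥0∞ := B ^ (1/q) with hJnndef
      have hJlt : Jnn < ⊤ :=
        ENNReal.rpow_lt_top_of_nonneg (one_div_nonneg.mpr hqr.pos.le) hBlt.ne
      refine ⟨Jnn.toReal, ENNReal.toReal_nonneg, ?_⟩
      intro f hf
      have hF0 : AEMeasurable (fun y : EuclideanSpace ℝ (Fin d) =>
          ENNReal.ofReal ((1 + ‖x₀ - y‖) ^ (-β))) volume := by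
        apply Measurable.aemeasurable
        apply ENNReal.measurable_ofReal.comp
        apply Continuous.measurable
        apply Continuous.rpow_const
        · exact continuous_const.add ((continuous_const.sub continuous_id).norm)
        · intro y
          left
          positivity
      have hΦ : AEMeasurable (fun y => ((‖f y‖₊ : ℝ≥0∞))) volume :=
        hf.aestronglyMeasurable.enorm
      have hHolder := ENNReal.lintegral_mul_le_Lp_mul_Lq volume hqr hF0 hΦ
      simp only [Pi.mul_apply] at hHolder
      have hpow : ∀ y : EuclideanSpace ℝ (Fin d),
          (ENNReal.ofReal ((1 + ‖x₀ - y‖) ^ (-β))) ^ q =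
            ENNReal.ofReal ((1 + ‖x₀ - y‖) ^ (-(β * q))) := by
        intro y
        rw [ENNReal.ofReal_rpow_of_nonneg (Real.rpow_nonneg (by positivity) _)
          hqr.pos.le]
        congr 1
        rw [← Real.rpow_mul (by positivity : (0:ℝ) ≤ 1 + ‖x₀ - y‖)]
        congr 1
        ring
      simp only [hpow] at hHolder
      have heq2 : (∫⁻ y, ((‖f y‖₊ : ℝ≥0∞)) ^ r ∂volume) ^ (1/r) = eLpNorm f p volume := by
        rw [eLpNorm_eq_lintegral_rpow_enorm_toReal hp0 hp'.ne]; rfl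
      calc (∫⁻ y, ENNReal.ofReal ((1 + ‖x₀ - y‖) ^ (-β)) * (‖f y‖₊ : ℝ≥0∞) ∂volume)
          ≤ B ^ (1/q) * (∫⁻ y, ((‖f y‖₊ : ℝ≥0∞)) ^ r ∂volume) ^ (1/r) := hHolder
        _ = ENNReal.ofReal Jnn.toReal * eLpNorm f p volume := by
            rw [heq2, ENNReal.ofReal_toReal hJlt.ne]
  -- now the main estimate
  refine ⟨K2 d α * (1 + 1/δ) ^ β * J, ?_, ?_⟩
  · have := K2_nonneg (d := d) hα hα1
    have h1 : (0:ℝ) ≤ (1 + 1/δ) ^ β := Real.rpow_nonneg (by positivity) _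
    positivity
  intro f hf hvanish μ hμδ
  have hμ : (0:ℝ) < μ := by nlinarith
  set Kμ : ℝ := K2 d α * μ ^ (-(α/2)) * (1 + 1/δ) ^ β with hKμdef
  have hKμ0 : 0 ≤ Kμ := by
    apply mul_nonneg (mul_nonneg (K2_nonneg hα hα1) (Real.rpow_nonneg hμ.le _))
    exact Real.rpow_nonneg (by positivity) _
  have hae : ∀ᵐ y ∂(volume : Measure (EuclideanSpace ℝ (Fin d))),
      ENNReal.ofReal ‖AKernel d α μ (x₀ - y) * f y‖ ≤
        ENNReal.ofReal Kμ * (ENNReal.ofReal ((1 + ‖x₀ - y‖) ^ (-β)) * (‖f y‖₊ : ℝ≥0∞)) := by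
    filter_upwards [hvanish] with y hy
    rcases lt_or_ge ‖y - x₀‖ δ with hlt | hge
    · rw [hy hlt, mul_zero, norm_zero]
      simp
    · have hzn : δ ≤ ‖x₀ - y‖ := by rwa [norm_sub_rev]
      have hz0 : (0:ℝ) < ‖x₀ - y‖ := lt_of_lt_of_le hδ hzn
      have hzne : x₀ - y ≠ 0 := norm_pos_iff.mp hz0
      have hA0 : 0 ≤ AKernel d α μ (x₀ - y) := AKernel_nonneg hα hα1 hμ.le _
      have hA1 : AKernel d α μ (x₀ - y) ≤ Kμ * (1 + ‖x₀ - y‖) ^ (-β) := by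
        have h1 := AKernel_le hα hα1 hμ hzne
        have h2 := tail_bound hβ0 hδ hzn
        calc AKernel d α μ (x₀ - y)
            ≤ K2 d α * μ ^ (-(α/2)) * ‖x₀ - y‖ ^ (-((d:ℝ) + α/2)) := h1
          _ = K2 d α * μ ^ (-(α/2)) * ‖x₀ - y‖ ^ (-β) := by rw [← hβdef]
          _ ≤ K2 d α * μ ^ (-(α/2)) * ((1 + 1/δ) ^ β * (1 + ‖x₀ - y‖) ^ (-β)) := by
              apply mul_le_mul_of_nonneg_left h2
              exact mul_nonneg (K2_nonneg hα hα1) (Real.rpow_nonneg hμ.le _)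
          _ = Kμ * (1 + ‖x₀ - y‖) ^ (-β) := by rw [hKμdef]; ring
      calc ENNReal.ofReal ‖AKernel d α μ (x₀ - y) * f y‖
          = ENNReal.ofReal ‖AKernel d α μ (x₀ - y)‖ * ENNReal.ofReal ‖f y‖ := by
            rw [norm_mul, ENNReal.ofReal_mul (norm_nonneg _)]
        _ = ENNReal.ofReal (AKernel d α μ (x₀ - y)) * (‖f y‖₊ : ℝ≥0∞) := by
            congr 1
            · rw [Real.norm_eq_abs, abs_of_nonneg hA0]
            · rw [← enorm_eq_nnnorm, ← ofReal_norm]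
        _ ≤ ENNReal.ofReal (Kμ * (1 + ‖x₀ - y‖) ^ (-β)) * (‖f y‖₊ : ℝ≥0∞) :=
            mul_le_mul_left (ENNReal.ofReal_le_ofReal hA1) _
        _ = ENNReal.ofReal Kμ * (ENNReal.ofReal ((1 + ‖x₀ - y‖) ^ (-β)) * (‖f y‖₊ : ℝ≥0∞)) := by
            rw [ENNReal.ofReal_mul hKμ0, mul_assoc]
  have hchain : (∫⁻ y, ENNReal.ofReal ‖AKernel d α μ (x₀ - y) * f y‖ ∂volume) ≤
      ENNReal.ofReal Kμ * (ENNReal.ofReal J * eLpNorm f p volume) := by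
    calc (∫⁻ y, ENNReal.ofReal ‖AKernel d α μ (x₀ - y) * f y‖ ∂volume)
        ≤ ∫⁻ y, ENNReal.ofReal Kμ *
            (ENNReal.ofReal ((1 + ‖x₀ - y‖) ^ (-β)) * (‖f y‖₊ : ℝ≥0∞)) ∂volume :=
          lintegral_mono_ae hae
      _ = ENNReal.ofReal Kμ * ∫⁻ y,
            ENNReal.ofReal ((1 + ‖x₀ - y‖) ^ (-β)) * (‖f y‖₊ : ℝ≥0∞) ∂volume :=
          lintegral_const_mul' _ _ ENNReal.ofReal_ne_top
      _ ≤ ENNReal.ofReal Kμ * (ENNReal.ofReal J * eLpNorm f p volume) :=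
          mul_le_mul_right (hJholder f hf) _
  have hRHSne : ENNReal.ofReal Kμ * (ENNReal.ofReal J * eLpNorm f p volume) ≠ ⊤ :=
    ENNReal.mul_ne_top ENNReal.ofReal_ne_top
      (ENNReal.mul_ne_top ENNReal.ofReal_ne_top hf.eLpNorm_ne_top)
  calc |∫ y, AKernel d α μ (x₀ - y) * f y| = ‖∫ y, AKernel d α μ (x₀ - y) * f y‖ :=
        (Real.norm_eq_abs _).symm
    _ ≤ (∫⁻ y, ENNReal.ofReal ‖AKernel d α μ (x₀ - y) * f y‖ ∂volume).toReal :=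
        norm_integral_le_lintegral_norm _
    _ ≤ (ENNReal.ofReal Kμ * (ENNReal.ofReal J * eLpNorm f p volume)).toReal :=
        ENNReal.toReal_mono hRHSne hchain
    _ = Kμ * (J * (eLpNorm f p volume).toReal) := by
        rw [ENNReal.toReal_mul, ENNReal.toReal_mul, ENNReal.toReal_ofReal hKμ0,
          ENNReal.toReal_ofReal hJ0]
    _ = K2 d α * (1 + 1/δ) ^ β * J * μ ^ (-(α/2)) * (eLpNorm f p volume).toReal := by
        rw [hKμdef]; ring

end LocalizationAux

/-- quantitative localization. For `0 < α ≤ 1` and `1 ≤ p < ∞` there is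
`C = C(α,d,p)` such that if `f ∈ L^p` vanishes a.e. on the ball of radius `δ` around `x₀`
and `μδ > 1`, then
`|E_{α,μ} f(x₀)| = |(A_{α,μ} ⋆ f)(x₀)| ≤ C·μ^{−α/2}·δ^{−(d/p+α/2)}·‖f‖_p`;
in particular `E_{α,μ} f(x₀) = O(μ^{−α/2})` as `μ → ∞`. -/
theorem localization_estimate
    (d : ℕ) (hd : 1 ≤ d) (α : ℝ) (hα : 0 < α) (hα1 : α ≤ 1)
    (p : ℝ≥0∞) (hp : 1 ≤ p) (hp' : p < ⊤)
    (x₀ : EuclideanSpace ℝ (Fin d)) (δ : ℝ) (hδ : 0 < δ) :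
    ∃ C : ℝ, 0 < C ∧
      ∀ f : EuclideanSpace ℝ (Fin d) → ℝ, MemLp f p volume →
        (∀ᵐ x : EuclideanSpace ℝ (Fin d) ∂volume, ‖x - x₀‖ < δ → f x = 0) →
        ∀ μ : ℝ, 1 < μ * δ →
          |∫ y, AKernel d α μ (x₀ - y) * f y| ≤
            C * μ ^ (-α / 2) * δ ^ (-((d : ℝ) / p.toReal + α / 2)) *
              (eLpNorm f p volume).toReal := by
  obtain ⟨C₀, hC₀, hcore⟩ := LocalizationAux.core_estimate d α hα hα1 p hp hp' x₀ δ hδ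
  set x : ℝ := (d : ℝ) / p.toReal + α / 2 with hxdef
  refine ⟨(C₀ + 1) * δ ^ x, by positivity, ?_⟩
  intro f hf hvanish μ hμδ
  have hμ : (0:ℝ) < μ := by nlinarith
  have hδx : δ ^ x * δ ^ (-x) = 1 := by
    rw [← Real.rpow_add hδ]
    simp
  have hμα : (0:ℝ) ≤ μ ^ (-(α/2)) := Real.rpow_nonneg hμ.le _
  have hN : (0:ℝ) ≤ (eLpNorm f p volume).toReal := ENNReal.toReal_nonneg
  have hbound := hcore f hf hvanish μ hμδ
  have heq : (C₀ + 1) * δ ^ x * μ ^ (-(α/2)) * δ ^ (-x) * (eLpNorm f p volume).toReal =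
      (C₀ + 1) * μ ^ (-(α/2)) * (eLpNorm f p volume).toReal := by
    calc (C₀ + 1) * δ ^ x * μ ^ (-(α/2)) * δ ^ (-x) * (eLpNorm f p volume).toReal
        = (C₀ + 1) * (δ ^ x * δ ^ (-x)) * μ ^ (-(α/2)) * (eLpNorm f p volume).toReal := by
          ring
      _ = (C₀ + 1) * μ ^ (-(α/2)) * (eLpNorm f p volume).toReal := by rw [hδx]; ring
  have hfin : |∫ y, AKernel d α μ (x₀ - y) * f y| ≤
      (C₀ + 1) * δ ^ x * μ ^ (-(α/2)) * δ ^ (-x) * (eLpNorm f p volume).toReal := by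
    rw [heq]
    calc |∫ y, AKernel d α μ (x₀ - y) * f y| ≤
          C₀ * μ ^ (-(α/2)) * (eLpNorm f p volume).toReal := hbound
      _ ≤ (C₀ + 1) * μ ^ (-(α/2)) * (eLpNorm f p volume).toReal := by
          apply mul_le_mul_of_nonneg_right _ hN
          apply mul_le_mul_of_nonneg_right _ hμα
          linarith
  rw [show -α / 2 = -(α/2) by ring]
  exact hfin


end
end
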